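/- (Optimality of formal concepts as factors.) Let I ∈ {0,1}^{n×m} and suppose I = P ∘ Q for binary matrices P ∈ {0,1}^{n×k} and Q ∈ {0,1}^{k×m}. Then there exists a set F of formal concepts of the context (X,Y,I) with |F| ≤ k such that, for the n×|F| and |F|×m binary matrices P_F and Q_F, one has I = P_F ∘ Q_F. -/

import Mathlib

open Classical

def intentOf {G M : Type*} (I : G → M → Prop) (A : Set G) : Set M :=
  {m | ∀ g ∈ A, I g m}

def extentOf {G M : Type*} (I : G → M → Prop) (B : Set M) : Set G :=
  {g | ∀ m ∈ B, I g m}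

structure FormalConcept {G M : Type*} (I : G → M → Prop) where
  extent : Set G
  intent : Set M
  intentOf_extent : intentOf I extent = intent
  extentOf_intent : extentOf I intent = extent

/-- Boolean matrix product: `(P ∘ Q)_{ij} = ⋁_l P_{il} · Q_{lj}`. -/
noncomputable def boolProd {n m : ℕ} {ι : Type*} [Fintype ι]
    (P : Fin n → ι → Bool) (Q : ι → Fin m → Bool) : Fin n → Fin m → Bool :=
  fun i j => decide (∃ l : ι, P i l = true ∧ Q l j = true)

/-- The object-factor matrix `P_F`: `(P_F)_{il} = 1` iff `i ∈ A_l`. -/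
noncomputable def PF {n : ℕ} {M : Type*} {ι : Type*} (I : Fin n → M → Prop)
    (F : ι → FormalConcept I) : Fin n → ι → Bool :=
  fun i l => decide (i ∈ (F l).extent)

/-- The factor-attribute matrix `Q_F`: `(Q_F)_{lj} = 1` iff `j ∈ B_l`. -/
noncomputable def QF {m : ℕ} {G : Type*} {ι : Type*} (I : G → Fin m → Prop)
    (F : ι → FormalConcept I) : ι → Fin m → Bool :=
  fun l j => decide (j ∈ (F l).intent)

lemma intentOf_closure {G M : Type*} (I : G → M → Prop) (A : Set G) :
    intentOf I (extentOf I (intentOf I A)) = intentOf I A := by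
  ext mm
  constructor
  · intro hm g hg
    exact hm g (fun m' hm' => hm' g hg)
  · intro hm g hg
    exact hg mm hm

/-- The concept generated by a set of objects. -/
def conceptOf {G M : Type*} (I : G → M → Prop) (A : Set G) : FormalConcept I where
  extent := extentOf I (intentOf I A)
  intent := intentOf I A
  intentOf_extent := intentOf_closure I A
  extentOf_intent := rfl

/-- Optimality of formal concepts as factors: if `I = P ∘ Q` for binary matrices
`P ∈ {0,1}^{n×k}` and `Q ∈ {0,1}^{k×m}`, then there is a set `F` of formal concepts of the
context of `I` with `|F| ≤ k` such that `I = P_F ∘ Q_F`. -/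
theorem optimal_boolean_factorisation_by_concepts {n m k : ℕ} (I : Fin n → Fin m → Bool)
    (P : Fin n → Fin k → Bool) (Q : Fin k → Fin m → Bool)
    (h : ∀ (i : Fin n) (j : Fin m), I i j = boolProd P Q i j) :
    ∃ F : Finset (FormalConcept (fun (i : Fin n) (j : Fin m) => I i j = true)),
      F.card ≤ k ∧
      ∀ (i : Fin n) (j : Fin m),
        I i j = boolProd (PF _ (fun c : F => c.val))
          (QF _ (fun c : F => c.val)) i j := by
  classical
  set J : Fin n → Fin m → Prop := fun i j => I i j = true with hJ
  set c : Fin k → FormalConcept J := fun l => conceptOf J {i | P i l = true} with hc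
  refine ⟨Finset.image c Finset.univ, ?_, ?_⟩
  · calc (Finset.image c Finset.univ).card ≤ (Finset.univ : Finset (Fin k)).card :=
          Finset.card_image_le
      _ = k := by simp
  · intro i j
    have key : (I i j = true) ↔
        ∃ cc : (Finset.image c Finset.univ : Finset (FormalConcept J)),
          i ∈ (cc : FormalConcept J).extent ∧ j ∈ (cc : FormalConcept J).intent := by
      constructor
      · intro hij
        have := (h i j) ▸ hij
        simp only [boolProd, decide_eq_true_eq] at this
        obtain ⟨l, hPl, hQl⟩ := this
        refine ⟨⟨c l, Finset.mem_image_of_mem c (Finset.mem_univ l)⟩, ?_, ?_⟩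
        · intro m' hm'
          exact hm' i hPl
        · intro g hg
          have : I g j = boolProd P Q g j := h g j
          show I g j = true
          rw [this]
          simp only [boolProd, decide_eq_true_eq]
          exact ⟨l, hg, hQl⟩
      · rintro ⟨⟨cc, _⟩, hi, hj⟩
        have : i ∈ extentOf J cc.intent := cc.extentOf_intent ▸ hi
        exact this j hj
    rw [boolProd]
    by_cases hij : I i j = true
    · rw [hij]
      symm
      rw [decide_eq_true_iff]
      obtain ⟨cc, h1, h2⟩ := key.mp hij
      exact ⟨cc, by simpa [PF] using h1, by simpa [QF] using h2⟩
    · rw [Bool.not_eq_true] at hij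
      rw [hij]
      symm
      rw [decide_eq_false_iff_not]
      rintro ⟨cc, h1, h2⟩
      simp only [PF, QF, decide_eq_true_iff] at h1 h2
      have : I i j = true := key.mpr ⟨cc, h1, h2⟩
      simp [hij] at this
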